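/- Let C ≥ 1 and let 𝒟_C be the set of functions ψ ∈ L¹([0,1]) for which there exists a subinterval I_ψ ⊆ [0,1] such that: (1) |I_ψ| ≥ 1/C; (2) ψ = 0 outside I_ψ; (3) ψ > 0 on I_ψ; (4) |ψ(x) − ψ(y)| ≤ C·ψ(x)·|x − y| for all x, y ∈ I_ψ; (5) ∫₀¹ ψ = 1. Then 𝒟_C is a compact subset of L¹([0,1]). -/

import Mathlib

open MeasureTheory

namespace DensityCompactAux

open Set BoundedContinuousFunction Filter Topology

noncomputable section

/-- The measure: Lebesgue restricted to `[0,1]`. -/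
abbrev mu01 : Measure ℝ := volume.restrict (Set.Icc (0 : ℝ) 1)

instance : IsFiniteMeasure mu01 := by
  constructor
  rw [Measure.restrict_apply_univ, Real.volume_Icc]
  exact ENNReal.ofReal_lt_top

lemma mu01_univ : mu01 Set.univ = 1 := by
  rw [Measure.restrict_apply_univ, Real.volume_Icc]
  norm_num

/-- extension of a bounded continuous function on `[0,1]` to `ℝ` by projection. -/
def Fr (f : Set.Icc (0:ℝ) 1 →ᵇ ℝ) : ℝ → ℝ := fun x => f (Set.projIcc 0 1 zero_le_one x)

lemma continuous_Fr (f : Set.Icc (0:ℝ) 1 →ᵇ ℝ) : Continuous (Fr f) :=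
  f.continuous.comp continuous_projIcc

/-- the function associated to a parameter triple `(a, b, f)`. -/
def hfun (p : ℝ × ℝ × (Set.Icc (0:ℝ) 1 →ᵇ ℝ)) : ℝ → ℝ :=
  (Set.Icc p.1 p.2.1).indicator (Fr p.2.2)

lemma hfun_bdd (p : ℝ × ℝ × (Set.Icc (0:ℝ) 1 →ᵇ ℝ)) (x : ℝ) : |hfun p x| ≤ ‖p.2.2‖ := by
  unfold hfun
  by_cases hx : x ∈ Set.Icc p.1 p.2.1
  · rw [Set.indicator_of_mem hx]
    simpa [Fr, Real.norm_eq_abs] using p.2.2.norm_coe_le_norm (Set.projIcc 0 1 zero_le_one x)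
  · simp [Set.indicator_of_notMem hx, norm_nonneg]

lemma integrable_hfun (p : ℝ × ℝ × (Set.Icc (0:ℝ) 1 →ᵇ ℝ)) : Integrable (hfun p) mu01 := by
  have hm : StronglyMeasurable (hfun p) :=
    (continuous_Fr p.2.2).stronglyMeasurable.indicator measurableSet_Icc
  rw [← memLp_one_iff_integrable]
  exact MemLp.of_bound hm.aestronglyMeasurable ‖p.2.2‖
    (Filter.Eventually.of_forall fun x => by simpa [Real.norm_eq_abs] using hfun_bdd p x)

/-- the map into `L¹`. -/
def Phi (p : ℝ × ℝ × (Set.Icc (0:ℝ) 1 →ᵇ ℝ)) : Lp ℝ 1 mu01 :=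
  (integrable_hfun p).toL1 _

/-- The parameter set. -/
def Kset (C : ℝ) : Set (ℝ × ℝ × (Set.Icc (0:ℝ) 1 →ᵇ ℝ)) :=
  {p | 0 ≤ p.1 ∧ p.2.1 ≤ 1 ∧ 1 / C ≤ p.2.1 - p.1 ∧
    LipschitzWith (Real.toNNReal (C * (C * (1 + C)))) p.2.2 ∧
    (∀ x, p.2.2 x ∈ Set.Icc (0:ℝ) (C * (1 + C))) ∧
    (∀ x ∈ Set.Icc p.1 p.2.1, ∀ y ∈ Set.Icc p.1 p.2.1,
      |Fr p.2.2 x - Fr p.2.2 y| ≤ C * Fr p.2.2 x * |x - y|) ∧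
    (∀ x ∈ Set.Icc p.1 p.2.1, 1 / (1 + C) ≤ Fr p.2.2 x) ∧
    ∫ x in Set.Icc (0:ℝ) 1, hfun p x = 1}

lemma dist_Phi_le (C : ℝ) (hC : 1 ≤ C) (p q : ℝ × ℝ × (Set.Icc (0:ℝ) 1 →ᵇ ℝ))
    (hp : ∀ x, p.2.2 x ∈ Set.Icc (0:ℝ) (C * (1 + C)))
    (hq : ∀ x, q.2.2 x ∈ Set.Icc (0:ℝ) (C * (1 + C))) :
    dist (Phi p) (Phi q) ≤
      dist p.2.2 q.2.2 + (C * (1 + C)) * (|p.1 - q.1| + |p.2.1 - q.2.1|) := by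
  set D := dist p.2.2 q.2.2 with hDdef
  set M := C * (1 + C) with hMdef
  have hM : 0 ≤ M := by nlinarith
  have hD : 0 ≤ D := dist_nonneg
  set T : Set ℝ := Set.Icc (min p.1 q.1) (max p.1 q.1) ∪
    Set.Icc (min p.2.1 q.2.1) (max p.2.1 q.2.1) with hTdef
  have hTmeas : MeasurableSet T := measurableSet_Icc.union measurableSet_Icc
  -- pointwise bound
  have hpt : ∀ x, edist (hfun p x) (hfun q x) ≤
      ENNReal.ofReal D + T.indicator (fun _ => ENNReal.ofReal M) x := by
    intro x
    have habs : ∀ r : ℝ × ℝ × (Set.Icc (0:ℝ) 1 →ᵇ ℝ),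
        (∀ z, r.2.2 z ∈ Set.Icc (0:ℝ) M) → |Fr r.2.2 x| ≤ M := by
      intro r hr
      have h0 : Fr r.2.2 x ∈ Set.Icc (0:ℝ) M := hr _
      rw [abs_le]
      exact ⟨by linarith [h0.1], h0.2⟩
    have hmemT : ∀ a b a' b' : ℝ, x ∈ Set.Icc a b → x ∉ Set.Icc a' b' →
        x ∈ Set.Icc (min a a') (max a a') ∪ Set.Icc (min b b') (max b b') := by
      intro a b a' b' h1 h2
      rw [Set.mem_Icc, not_and_or, not_le, not_le] at h2
      rcases h2 with h2 | h2
      · exact Or.inl ⟨le_trans (min_le_left _ _) h1.1, le_trans h2.le (le_max_right _ _)⟩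
      · exact Or.inr ⟨le_trans (min_le_right _ _) h2.le, le_trans h1.2 (le_max_left _ _)⟩
    by_cases h1 : x ∈ Set.Icc p.1 p.2.1 <;> by_cases h2 : x ∈ Set.Icc q.1 q.2.1
    · rw [hfun, hfun, Set.indicator_of_mem h1, Set.indicator_of_mem h2]
      refine le_trans ?_ (self_le_add_right _ _)
      rw [edist_dist]
      exact ENNReal.ofReal_le_ofReal
        (BoundedContinuousFunction.dist_coe_le_dist (f := p.2.2) (g := q.2.2) _)
    · have hx : x ∈ T := hmemT p.1 p.2.1 q.1 q.2.1 h1 h2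
      rw [hfun, hfun, Set.indicator_of_mem h1, Set.indicator_of_notMem h2,
        Set.indicator_of_mem hx, edist_dist, dist_zero_right, Real.norm_eq_abs]
      exact le_add_left (ENNReal.ofReal_le_ofReal (habs p hp))
    · have hx : x ∈ T := by
        have := hmemT q.1 q.2.1 p.1 p.2.1 h2 h1
        rw [min_comm q.1 p.1, max_comm q.1 p.1, min_comm q.2.1 p.2.1,
          max_comm q.2.1 p.2.1] at this
        exact this
      rw [hfun, hfun, Set.indicator_of_notMem h1, Set.indicator_of_mem h2,
        Set.indicator_of_mem hx, edist_dist, dist_comm, dist_zero_right, Real.norm_eq_abs]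
      exact le_add_left (ENNReal.ofReal_le_ofReal (habs q hq))
    · rw [hfun, hfun, Set.indicator_of_notMem h1, Set.indicator_of_notMem h2]
      simp
  -- the distance as a lower integral
  have hdist : dist (Phi p) (Phi q) =
      (∫⁻ x, edist (hfun p x) (hfun q x) ∂mu01).toReal := by
    rw [Phi, Phi, dist_edist, Integrable.edist_toL1_toL1]
  -- measure of T
  have hT : mu01 T ≤ ENNReal.ofReal |p.1 - q.1| + ENNReal.ofReal |p.2.1 - q.2.1| := by
    rw [Measure.restrict_apply hTmeas]
    refine le_trans (measure_mono Set.inter_subset_left) ?_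
    refine le_trans (measure_union_le _ _) ?_
    rw [Real.volume_Icc, Real.volume_Icc, max_sub_min_eq_abs, max_sub_min_eq_abs,
      abs_sub_comm p.1 q.1, abs_sub_comm p.2.1 q.2.1]
  -- integrate
  have hle : ∫⁻ x, edist (hfun p x) (hfun q x) ∂mu01 ≤
      ENNReal.ofReal (D + M * (|p.1 - q.1| + |p.2.1 - q.2.1|)) := by
    refine le_trans (lintegral_mono hpt) ?_
    rw [lintegral_add_left measurable_const, lintegral_const, mu01_univ, mul_one,
      lintegral_indicator_const hTmeas]
    have : ENNReal.ofReal M * mu01 T ≤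
        ENNReal.ofReal (M * (|p.1 - q.1| + |p.2.1 - q.2.1|)) := by
      rw [ENNReal.ofReal_mul hM, ENNReal.ofReal_add (abs_nonneg _) (abs_nonneg _)]
      exact mul_le_mul_right hT _
    calc ENNReal.ofReal D + ENNReal.ofReal M * mu01 T
        ≤ ENNReal.ofReal D + ENNReal.ofReal (M * (|p.1 - q.1| + |p.2.1 - q.2.1|)) :=
          add_le_add_right this _
      _ = ENNReal.ofReal (D + M * (|p.1 - q.1| + |p.2.1 - q.2.1|)) := by
          rw [ENNReal.ofReal_add hD (by positivity)]
  rw [hdist]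
  exact ENNReal.toReal_le_of_le_ofReal (by positivity) hle

set_option synthInstance.maxHeartbeats 1000000 in
lemma kset_compact (C : ℝ) (hC : 1 ≤ C) : IsCompact (Kset C) := by
  have hCpos : 0 < C := lt_of_lt_of_le one_pos hC
  have hM : (0:ℝ) ≤ C * (1 + C) := by nlinarith
  set L : NNReal := Real.toNNReal (C * (C * (1 + C))) with hL
  set A : Set (Set.Icc (0:ℝ) 1 →ᵇ ℝ) :=
    {f | LipschitzWith L f ∧ ∀ x, f x ∈ Set.Icc (0:ℝ) (C * (1 + C))} with hA
  have hAclosed : IsClosed A := by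
    have h1 : IsClosed {f : Set.Icc (0:ℝ) 1 →ᵇ ℝ | LipschitzWith L f} := by
      have heq : {f : Set.Icc (0:ℝ) 1 →ᵇ ℝ | LipschitzWith L f} =
          ⋂ (x) (y), {f : Set.Icc (0:ℝ) 1 →ᵇ ℝ | dist (f x) (f y) ≤ L * dist x y} := by
        ext f
        simp only [Set.mem_setOf_eq, Set.mem_iInter, lipschitzWith_iff_dist_le_mul]
      rw [heq]
      exact isClosed_iInter fun x => isClosed_iInter fun y =>
        isClosed_le ((continuous_eval_const x).dist (continuous_eval_const y))
          continuous_const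
    have h2 : IsClosed {f : Set.Icc (0:ℝ) 1 →ᵇ ℝ | ∀ x, f x ∈ Set.Icc (0:ℝ) (C * (1 + C))} := by
      have heq : {f : Set.Icc (0:ℝ) 1 →ᵇ ℝ | ∀ x, f x ∈ Set.Icc (0:ℝ) (C * (1 + C))} =
          ⋂ x, (fun f : Set.Icc (0:ℝ) 1 →ᵇ ℝ => f x) ⁻¹' (Set.Icc (0:ℝ) (C * (1 + C))) := by
        ext f; simp [Set.mem_iInter]
      rw [heq]
      exact isClosed_iInter fun x => isClosed_Icc.preimage (continuous_eval_const x)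
    exact h1.inter h2
  have hAcomp : IsCompact A := by
    refine arzela_ascoli₂ (Set.Icc (0:ℝ) (C * (1 + C))) isCompact_Icc A hAclosed
      (fun f x hf => hf.2 x) ?_
    apply Metric.equicontinuous_of_continuity_modulus (fun r => (L : ℝ) * r)
    · have : Filter.Tendsto (fun r : ℝ => (L : ℝ) * r) (𝓝 0) (𝓝 ((L : ℝ) * 0)) :=
        (continuous_const.mul continuous_id).tendsto 0
      simpa using this
    · intro x y f
      exact f.2.1.dist_le_mul x y
  have hK0 : IsCompact ((Set.Icc (0:ℝ) 1) ×ˢ ((Set.Icc (0:ℝ) 1) ×ˢ A)) :=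
    isCompact_Icc.prod (isCompact_Icc.prod hAcomp)
  have hsub : Kset C ⊆ (Set.Icc (0:ℝ) 1) ×ˢ ((Set.Icc (0:ℝ) 1) ×ˢ A) := by
    rintro p ⟨h1, h2, h3, h4, h5, -, -, -⟩
    have h1C : 0 < 1 / C := by positivity
    refine ⟨⟨h1, by linarith⟩, ⟨⟨by linarith, h2⟩, h4, h5⟩⟩
  have hKclosed : IsClosed (Kset C) := by
    refine IsSeqClosed.isClosed ?_
    intro u p hu hup
    have ha : Filter.Tendsto (fun n => (u n).1) Filter.atTop (𝓝 p.1) :=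
      (continuous_fst.tendsto p).comp hup
    have hb : Filter.Tendsto (fun n => (u n).2.1) Filter.atTop (𝓝 p.2.1) :=
      ((continuous_fst.comp continuous_snd).tendsto p).comp hup
    have hf : Filter.Tendsto (fun n => (u n).2.2) Filter.atTop (𝓝 p.2.2) :=
      ((continuous_snd.comp continuous_snd).tendsto p).comp hup
    have hfd : Filter.Tendsto (fun n => dist (u n).2.2 p.2.2) Filter.atTop (𝓝 0) :=
      tendsto_iff_dist_tendsto_zero.mp hf
    have heval : ∀ z, Filter.Tendsto (fun n => (u n).2.2 z) Filter.atTop (𝓝 (p.2.2 z)) :=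
      fun z => ((continuous_eval_const z).tendsto p.2.2).comp hf
    have hFr : ∀ (v : ℕ → ℝ) (z : ℝ), Filter.Tendsto v Filter.atTop (𝓝 z) →
        Filter.Tendsto (fun n => Fr (u n).2.2 (v n)) Filter.atTop (𝓝 (Fr p.2.2 z)) := by
      intro v z hv
      rw [tendsto_iff_dist_tendsto_zero]
      have h2 : Filter.Tendsto (fun n => Fr p.2.2 (v n)) Filter.atTop (𝓝 (Fr p.2.2 z)) :=
        ((continuous_Fr p.2.2).tendsto z).comp hv
      have hb2 : Filter.Tendsto
          (fun n => dist (u n).2.2 p.2.2 + dist (Fr p.2.2 (v n)) (Fr p.2.2 z))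
          Filter.atTop (𝓝 0) := by
        simpa using hfd.add (tendsto_iff_dist_tendsto_zero.mp h2)
      refine squeeze_zero (fun n => dist_nonneg) (fun n => ?_) hb2
      calc dist (Fr (u n).2.2 (v n)) (Fr p.2.2 z)
          ≤ dist (Fr (u n).2.2 (v n)) (Fr p.2.2 (v n)) + dist (Fr p.2.2 (v n)) (Fr p.2.2 z) :=
            dist_triangle _ _ _
        _ ≤ dist (u n).2.2 p.2.2 + dist (Fr p.2.2 (v n)) (Fr p.2.2 z) :=
            add_le_add_left (BoundedContinuousFunction.dist_coe_le_dist _) _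
    have h1C : 0 < 1 / C := by positivity
    have hab : ∀ n, (u n).1 ≤ (u n).2.1 := fun n => by
      have := (hu n).2.2.1; linarith
    -- clamped sequences
    have hclamp : ∀ x ∈ Set.Icc p.1 p.2.1,
        (∀ n, max (u n).1 (min (u n).2.1 x) ∈ Set.Icc (u n).1 (u n).2.1) ∧
        Filter.Tendsto (fun n => max (u n).1 (min (u n).2.1 x)) Filter.atTop (𝓝 x) := by
      intro x hx
      constructor
      · exact fun n => ⟨le_max_left _ _, max_le (hab n) (min_le_left _ _)⟩
      · have : Filter.Tendsto (fun n => max (u n).1 (min (u n).2.1 x)) Filter.atTop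
            (𝓝 (max p.1 (min p.2.1 x))) := ha.max (hb.min tendsto_const_nhds)
        rwa [min_eq_right hx.2, max_eq_right hx.1] at this
    have hmem1 : 0 ≤ p.1 := ge_of_tendsto' ha fun n => (hu n).1
    have hmem2 : p.2.1 ≤ 1 := le_of_tendsto' hb fun n => (hu n).2.1
    have hmem3 : 1 / C ≤ p.2.1 - p.1 :=
      ge_of_tendsto' (hb.sub ha) fun n => (hu n).2.2.1
    have hmem4 : LipschitzWith L p.2.2 := by
      rw [lipschitzWith_iff_dist_le_mul]
      intro x y
      exact le_of_tendsto' ((heval x).dist (heval y))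
        fun n => (hu n).2.2.2.1.dist_le_mul x y
    have hmem5 : ∀ x, p.2.2 x ∈ Set.Icc (0:ℝ) (C * (1 + C)) := fun x =>
      ⟨ge_of_tendsto' (heval x) fun n => ((hu n).2.2.2.2.1 x).1,
       le_of_tendsto' (heval x) fun n => ((hu n).2.2.2.2.1 x).2⟩
    have hmem6 : ∀ x ∈ Set.Icc p.1 p.2.1, ∀ y ∈ Set.Icc p.1 p.2.1,
        |Fr p.2.2 x - Fr p.2.2 y| ≤ C * Fr p.2.2 x * |x - y| := by
      intro x hx y hy
      obtain ⟨hxm, hxt⟩ := hclamp x hx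
      obtain ⟨hym, hyt⟩ := hclamp y hy
      have hFx := hFr _ x hxt
      have hFy := hFr _ y hyt
      refine le_of_tendsto_of_tendsto' ((hFx.sub hFy).abs)
        ((tendsto_const_nhds.mul hFx).mul ((hxt.sub hyt).abs)) fun n => ?_
      exact (hu n).2.2.2.2.2.1 _ (hxm n) _ (hym n)
    have hmem7 : ∀ x ∈ Set.Icc p.1 p.2.1, 1 / (1 + C) ≤ Fr p.2.2 x := by
      intro x hx
      obtain ⟨hxm, hxt⟩ := hclamp x hx
      exact ge_of_tendsto' (hFr _ x hxt) fun n => (hu n).2.2.2.2.2.2.1 _ (hxm n)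
    have hmem8 : ∫ x in Set.Icc (0:ℝ) 1, hfun p x = 1 := by
      have hPhi : Filter.Tendsto (fun n => Phi (u n)) Filter.atTop (𝓝 (Phi p)) := by
        rw [tendsto_iff_dist_tendsto_zero]
        have hb3 : Filter.Tendsto (fun n => dist (u n).2.2 p.2.2 +
            (C * (1 + C)) * (|(u n).1 - p.1| + |(u n).2.1 - p.2.1|)) Filter.atTop (𝓝 0) := by
          have h1 : Filter.Tendsto (fun n => |(u n).1 - p.1|) Filter.atTop (𝓝 0) := by
            have := tendsto_iff_dist_tendsto_zero.mp ha
            simpa [Real.dist_eq] using this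
          have h2 : Filter.Tendsto (fun n => |(u n).2.1 - p.2.1|) Filter.atTop (𝓝 0) := by
            have := tendsto_iff_dist_tendsto_zero.mp hb
            simpa [Real.dist_eq] using this
          have := hfd.add ((tendsto_const_nhds (x := C * (1 + C))).mul (h1.add h2))
          simpa using this
        refine squeeze_zero (fun n => dist_nonneg) (fun n => ?_) hb3
        exact dist_Phi_le C hC (u n) p (hu n).2.2.2.2.1 hmem5
      have hcont := MeasureTheory.continuous_integral (μ := mu01) (G := ℝ)
      have hint : Filter.Tendsto (fun n => ∫ x, (Phi (u n) : ℝ → ℝ) x ∂mu01)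
          Filter.atTop (𝓝 (∫ x, (Phi p : ℝ → ℝ) x ∂mu01)) :=
        (hcont.tendsto (Phi p)).comp hPhi
      have heqi : ∀ q, ∫ x, (Phi q : ℝ → ℝ) x ∂mu01 = ∫ x, hfun q x ∂mu01 :=
        fun q => integral_congr_ae (Integrable.coeFn_toL1 _)
      simp only [heqi] at hint
      have hconst : Filter.Tendsto (fun _ : ℕ => (1:ℝ)) Filter.atTop (𝓝 1) :=
        tendsto_const_nhds
      have : ∀ n, ∫ x, hfun (u n) x ∂mu01 = 1 := fun n => (hu n).2.2.2.2.2.2.2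
      simp only [this] at hint
      exact (tendsto_nhds_unique hconst hint).symm
    exact ⟨hmem1, hmem2, hmem3, hmem4, hmem5, hmem6, hmem7, hmem8⟩
  exact hK0.of_isClosed_subset hKclosed hsub

lemma continuousOn_Phi (C : ℝ) (hC : 1 ≤ C) : ContinuousOn Phi (Kset C) := by
  intro p hp
  set φ : (ℝ × ℝ × (Set.Icc (0:ℝ) 1 →ᵇ ℝ)) → ℝ :=
    fun q => dist q.2.2 p.2.2 + (C * (1 + C)) * (|q.1 - p.1| + |q.2.1 - p.2.1|) with hφdef
  have hcont : Continuous φ := by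
    apply Continuous.add
    · exact (continuous_snd.comp continuous_snd).dist continuous_const
    · exact continuous_const.mul
        (((continuous_fst.sub continuous_const).abs).add
          (((continuous_fst.comp continuous_snd).sub continuous_const).abs))
  have hφ0 : Filter.Tendsto φ (nhdsWithin p (Kset C)) (𝓝 0) := by
    have := (hcont.tendsto p).mono_left (nhdsWithin_le_nhds (s := Kset C))
    simpa [hφdef] using this
  rw [ContinuousWithinAt, tendsto_iff_dist_tendsto_zero]
  refine squeeze_zero' (Filter.Eventually.of_forall fun q => dist_nonneg) ?_ hφ0
  filter_upwards [self_mem_nhdsWithin] with q hq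
  exact dist_Phi_le C hC q p hq.2.2.2.2.1 hp.2.2.2.2.1

end

end DensityCompactAux

open DensityCompactAux Filter Topology BoundedContinuousFunction

theorem density_class_compact (C : ℝ) (hC : 1 ≤ C) :
    IsCompact {ψ : Lp ℝ 1 (volume.restrict (Set.Icc (0 : ℝ) 1)) |
      ∃ a b : ℝ, 0 ≤ a ∧ a < b ∧ b ≤ 1 ∧ 1 / C ≤ b - a ∧
        ∃ g : ℝ → ℝ,
          (ψ : ℝ → ℝ) =ᵐ[volume.restrict (Set.Icc (0 : ℝ) 1)] g ∧
          (∀ x ∉ Set.Icc a b, g x = 0) ∧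
          (∀ x ∈ Set.Icc a b, 0 < g x) ∧
          (∀ x ∈ Set.Icc a b, ∀ y ∈ Set.Icc a b, |g x - g y| ≤ C * g x * |x - y|) ∧
          ∫ x in Set.Icc (0 : ℝ) 1, g x = 1} := by
  have hCpos : 0 < C := lt_of_lt_of_le one_pos hC
  have h1C : (0:ℝ) < 1 + C := by linarith
  have key : {ψ : Lp ℝ 1 (volume.restrict (Set.Icc (0 : ℝ) 1)) |
      ∃ a b : ℝ, 0 ≤ a ∧ a < b ∧ b ≤ 1 ∧ 1 / C ≤ b - a ∧
        ∃ g : ℝ → ℝ,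
          (ψ : ℝ → ℝ) =ᵐ[volume.restrict (Set.Icc (0 : ℝ) 1)] g ∧
          (∀ x ∉ Set.Icc a b, g x = 0) ∧
          (∀ x ∈ Set.Icc a b, 0 < g x) ∧
          (∀ x ∈ Set.Icc a b, ∀ y ∈ Set.Icc a b, |g x - g y| ≤ C * g x * |x - y|) ∧
          ∫ x in Set.Icc (0 : ℝ) 1, g x = 1} = Phi '' Kset C := by
    apply Set.Subset.antisymm
    · rintro ψ ⟨a, b, ha0, hab, hb1, hlen, g, hψg, hg0, hgpos, hglip, hgint⟩
      have hab' : Set.Icc a b ⊆ Set.Icc (0:ℝ) 1 := Set.Icc_subset_Icc ha0 hb1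
      have hdiam : ∀ x ∈ Set.Icc a b, ∀ y ∈ Set.Icc a b, |x - y| ≤ 1 := by
        intro x hx y hy
        have hx' := hab' hx; have hy' := hab' hy
        rw [abs_sub_le_iff]
        constructor <;> linarith [hx'.1, hx'.2, hy'.1, hy'.2]
      have hcomp : ∀ x ∈ Set.Icc a b, ∀ y ∈ Set.Icc a b, g y ≤ (1 + C) * g x := by
        intro x hx y hy
        have h := hglip x hx y hy
        have h2 : g y - g x ≤ |g x - g y| := by
          rw [abs_sub_comm]; exact le_abs_self _
        have h3 : C * g x * |x - y| ≤ C * g x * 1 :=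
          mul_le_mul_of_nonneg_left (hdiam x hx y hy)
            (mul_nonneg hCpos.le (hgpos x hx).le)
        linarith
      have hamem : a ∈ Set.Icc a b := ⟨le_rfl, hab.le⟩
      have hbound0 : ∀ x ∈ Set.Icc a b, g x ≤ (1 + C) * g a := fun x hx =>
        hcomp a hamem x hx
      have hlipOn : LipschitzOnWith (Real.toNNReal (C * ((1 + C) * g a))) g (Set.Icc a b) := by
        rw [lipschitzOnWith_iff_dist_le_mul]
        intro x hx y hy
        rw [Real.dist_eq, Real.dist_eq, Real.coe_toNNReal _
          (mul_nonneg hCpos.le (mul_nonneg h1C.le (hgpos a hamem).le))]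
        calc |g x - g y| ≤ C * g x * |x - y| := hglip x hx y hy
          _ ≤ C * ((1 + C) * g a) * |x - y| :=
            mul_le_mul_of_nonneg_right
              (mul_le_mul_of_nonneg_left (hbound0 x hx) hCpos.le) (abs_nonneg _)
      have hgcont : ContinuousOn g (Set.Icc a b) := hlipOn.continuousOn
      have hgint_ab : IntegrableOn g (Set.Icc a b) := hgcont.integrableOn_Icc
      have hgeq : g = (Set.Icc a b).indicator g := by
        funext x
        by_cases hx : x ∈ Set.Icc a b
        · rw [Set.indicator_of_mem hx]
        · rw [Set.indicator_of_notMem hx, hg0 x hx]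
      have hint_ab : ∫ x in Set.Icc a b, g x = 1 := by
        calc ∫ x in Set.Icc a b, g x
            = ∫ x in Set.Icc (0:ℝ) 1 ∩ Set.Icc a b, g x := by
              rw [Set.inter_eq_self_of_subset_right hab']
          _ = ∫ x in Set.Icc (0:ℝ) 1, (Set.Icc a b).indicator g x :=
              (setIntegral_indicator measurableSet_Icc).symm
          _ = ∫ x in Set.Icc (0:ℝ) 1, g x := by rw [← hgeq]
          _ = 1 := hgint
      have hvol : (volume (Set.Icc a b)).toReal = b - a := by
        rw [Real.volume_Icc, ENNReal.toReal_ofReal (by linarith)]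
      -- lower bound
      have hlb : ∀ y ∈ Set.Icc a b, 1 / (1 + C) ≤ g y := by
        intro y hy
        have hgy := (hgpos y hy).le
        have hmono : ∫ x in Set.Icc a b, g x ≤ ∫ x in Set.Icc a b, (1 + C) * g y :=
          setIntegral_mono_on hgint_ab
            (integrableOn_const (by rw [Real.volume_Icc]; exact ENNReal.ofReal_ne_top))
            measurableSet_Icc (fun x hx => hcomp y hy x hx)
        rw [hint_ab, setIntegral_const, measureReal_def, hvol, smul_eq_mul] at hmono
        have hba : b - a ≤ 1 := by linarith [(hab' hamem).1, (hab' ⟨hab.le, le_rfl⟩).2]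
        have h5 : (b - a) * ((1 + C) * g y) ≤ 1 * ((1 + C) * g y) :=
          mul_le_mul_of_nonneg_right hba (by positivity)
        rw [div_le_iff₀ h1C]
        nlinarith
      -- upper bound
      have hub : ∀ y ∈ Set.Icc a b, g y ≤ C * (1 + C) := by
        intro y hy
        have hgy := (hgpos y hy).le
        have hmono : ∫ x in Set.Icc a b, (fun _ => g y) x ≤ ∫ x in Set.Icc a b, (1 + C) * g x := by
          refine setIntegral_mono_on
            (integrableOn_const (by rw [Real.volume_Icc]; exact ENNReal.ofReal_ne_top))
            (hgint_ab.const_mul _) measurableSet_Icc (fun x hx => hcomp x hx y hy)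
        rw [setIntegral_const, measureReal_def, hvol, smul_eq_mul, integral_const_mul, hint_ab, mul_one] at hmono
        have h7 : g y / C ≤ 1 + C := by
          calc g y / C = (1 / C) * g y := (one_div_mul_eq_div _ _).symm
            _ ≤ (b - a) * g y := mul_le_mul_of_nonneg_right hlen hgy
            _ ≤ 1 + C := hmono
        have := (div_le_iff₀ hCpos).mp h7
        linarith [this, mul_comm (1 + C) C]
      -- the clamp function
      set c : ℝ → ℝ := fun x => max a (min b x) with hcdef
      have hc_mem : ∀ x, c x ∈ Set.Icc a b := fun x =>
        ⟨le_max_left _ _, max_le hab.le (min_le_left _ _)⟩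
      have hc_id : ∀ x ∈ Set.Icc a b, c x = x := by
        intro x hx
        rw [hcdef]
        simp only
        rw [min_eq_right hx.2, max_eq_right hx.1]
      have hc_lip : ∀ x y, |c x - c y| ≤ |x - y| := by
        intro x y
        calc |max a (min b x) - max a (min b y)|
            = |max (min b x) a - max (min b y) a| := by rw [max_comm a, max_comm a]
          _ ≤ |min b x - min b y| := abs_max_sub_max_le_abs _ _ _
          _ ≤ max |b - b| |x - y| := abs_min_sub_min_le_max _ _ _ _
          _ = |x - y| := by
              rw [sub_self, abs_zero]
              exact max_eq_right (abs_nonneg _)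
      have hgc_lip : ∀ x y, |g (c x) - g (c y)| ≤ C * (C * (1 + C)) * |x - y| := by
        intro x y
        calc |g (c x) - g (c y)| ≤ C * g (c x) * |c x - c y| :=
              hglip _ (hc_mem x) _ (hc_mem y)
          _ ≤ C * (C * (1 + C)) * |x - y| :=
              mul_le_mul (mul_le_mul_of_nonneg_left (hub _ (hc_mem x)) hCpos.le)
                (hc_lip x y) (abs_nonneg _) (by positivity)
      have hgc_lipW : LipschitzWith (Real.toNNReal (C * (C * (1 + C)))) (fun x => g (c x)) := by
        rw [lipschitzWith_iff_dist_le_mul]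
        intro x y
        rw [Real.dist_eq, Real.dist_eq, Real.coe_toNNReal _ (by positivity)]
        exact hgc_lip x y
      have hgc_cont : Continuous fun x => g (c x) := hgc_lipW.continuous
      set f : Set.Icc (0:ℝ) 1 →ᵇ ℝ :=
        BoundedContinuousFunction.mkOfCompact ⟨fun z : Set.Icc (0:ℝ) 1 => g (c z),
          hgc_cont.comp continuous_subtype_val⟩ with hfdef
      have hf_apply : ∀ z : Set.Icc (0:ℝ) 1, f z = g (c z) := fun z => rfl
      have hFr_eq : ∀ x ∈ Set.Icc a b, Fr f x = g x := by
        intro x hx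
        have hx01 : x ∈ Set.Icc (0:ℝ) 1 := hab' hx
        have h1 : Fr f x = g (c ((Set.projIcc 0 1 zero_le_one x : Set.Icc (0:ℝ) 1) : ℝ)) := rfl
        rw [h1, Set.projIcc_of_mem _ hx01]
        show g (c x) = g x
        rw [hc_id x hx]
      have hhfun : hfun (a, b, f) = g := by
        funext x
        show (Set.Icc a b).indicator (Fr f) x = g x
        by_cases hx : x ∈ Set.Icc a b
        · rw [Set.indicator_of_mem hx]; exact hFr_eq x hx
        · rw [Set.indicator_of_notMem hx]; exact (hg0 x hx).symm
      have hfLip : LipschitzWith (Real.toNNReal (C * (C * (1 + C)))) f := by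
        rw [lipschitzWith_iff_dist_le_mul]
        intro z w
        rw [Real.coe_toNNReal _ (by positivity)]
        calc dist (f z) (f w) = |g (c (z : ℝ)) - g (c (w : ℝ))| := by
              rw [hf_apply, hf_apply, Real.dist_eq]
          _ ≤ C * (C * (1 + C)) * |(z : ℝ) - (w : ℝ)| := hgc_lip _ _
          _ = C * (C * (1 + C)) * dist z w := by rw [Subtype.dist_eq, Real.dist_eq]
      refine ⟨(a, b, f), ⟨ha0, hb1, hlen, hfLip, ?_, ?_, ?_, ?_⟩, ?_⟩
      · intro z
        rw [hf_apply]
        exact ⟨(hgpos _ (hc_mem z)).le, hub _ (hc_mem z)⟩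
      · show ∀ x ∈ Set.Icc a b, ∀ y ∈ Set.Icc a b, |Fr f x - Fr f y| ≤ C * Fr f x * |x - y|
        intro x hx y hy
        rw [hFr_eq x hx, hFr_eq y hy]
        exact hglip x hx y hy
      · show ∀ x ∈ Set.Icc a b, 1 / (1 + C) ≤ Fr f x
        intro x hx
        rw [hFr_eq x hx]
        exact hlb x hx
      · show ∫ x in Set.Icc (0:ℝ) 1, hfun (a, b, f) x = 1
        rw [hhfun]
        exact hgint
      · show Phi (a, b, f) = ψ
        have hψint : Integrable (fun x => (ψ : ℝ → ℝ) x) mu01 := L1.integrable_coeFn ψ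
        have heq1 : Phi (a, b, f) = hψint.toL1 _ :=
          (Integrable.toL1_eq_toL1_iff _ _ _ _).mpr (hhfun ▸ hψg.symm)
        rw [heq1, Integrable.toL1_coeFn]
    · rintro ψ ⟨p, hp, rfl⟩
      have h1Cpos : 0 < 1 / C := by positivity
      have hinv : 0 < 1 / (1 + C) := by positivity
      refine ⟨p.1, p.2.1, hp.1, by linarith [hp.2.2.1], hp.2.1, hp.2.2.1, hfun p,
        Integrable.coeFn_toL1 _, ?_, ?_, ?_, hp.2.2.2.2.2.2.2⟩
      · intro x hx
        exact Set.indicator_of_notMem hx _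
      · intro x hx
        rw [hfun, Set.indicator_of_mem hx]
        have := hp.2.2.2.2.2.2.1 x hx
        linarith
      · intro x hx y hy
        rw [hfun, Set.indicator_of_mem hx, Set.indicator_of_mem hy]
        exact hp.2.2.2.2.2.1 x hx y hy
  rw [key]
  exact (kset_compact C hC).image_of_continuousOn (continuousOn_Phi C hC)
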